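/- Let δ ∈ (0,1), let G = (V,E) be a simple graph on n vertices with minimal degree at least δn and Cheeger constant Φ(G) = r, and let 𝒫: V = V₁ ⊔ … ⊔ V_k be a δ-primary decomposition of G. Then the graph H(𝒫, rδ²n²/(2k²)) is connected. -/

import Mathlib

open scoped Classical

noncomputable section

namespace Paper

variable {V : Type} [Fintype V]

/-- The degree of a vertex `v` in a simple graph `G`. -/
def deg (G : SimpleGraph V) (v : V) : ℕ := Nat.card {u | G.Adj v u}

/-- The transition matrix of the simple random walk on `G`. -/
def transMat (G : SimpleGraph V) : Matrix V V ℝ :=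
  fun v u => if G.Adj v u then (deg G v : ℝ)⁻¹ else 0

/-- Rayleigh quotients of `P` over unit functions orthogonal to constants in `L²(m)`;
its supremum is the second largest eigenvalue `λ₂`. -/
def rayleigh (P : Matrix V V ℝ) (m : V → ℝ) : Set ℝ :=
  {r | ∃ f : V → ℝ, (∑ v, m v * f v) = 0 ∧ (∑ v, m v * f v ^ 2) = 1 ∧
       r = ∑ v, m v * f v * (∑ u, P v u * f u)}

/-- The spectral gap `1 - λ₂` of `P`. -/
def matGap (P : Matrix V V ℝ) (m : V → ℝ) : ℝ := 1 - sSup (rayleigh P m)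

/-- The spectral gap `γ(G) = 1 - λ₂` of the simple random walk on `G`. -/
def gap (G : SimpleGraph V) : ℝ := matGap (transMat G) fun v => (deg G v : ℝ)

/-- The number of edges between `v` and the set `S`. -/
def degIn (G : SimpleGraph V) (v : V) (S : Finset V) : ℕ :=
  (S.filter fun u => G.Adj v u).card

/-- The number of edges of `G` between the (disjoint) vertex sets `A` and `B`. -/
def eBetween (G : SimpleGraph V) (A B : Finset V) : ℕ :=
  ((A ×ˢ B).filter fun p => G.Adj p.1 p.2).card

/-- The volume of a set of vertices: the sum of the degrees of its elements. -/
def vol (G : SimpleGraph V) (S : Finset V) : ℕ := ∑ v ∈ S, deg G v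

/-- The Cheeger constant `Φ(G) = min {|∂S| / Vol S : S ≠ ∅, π(S) ≤ 1/2}` of `G`. -/
def cheeger (G : SimpleGraph V) : ℝ :=
  sInf {r | ∃ S : Finset V, S.Nonempty ∧ 2 * vol G S ≤ vol G Finset.univ ∧
    r = (eBetween G S Sᶜ : ℝ) / (vol G S : ℝ)}

/-- `Vs` is a partition of the vertex set into (nonempty) sets. -/
def IsPartition {k : ℕ} (Vs : Fin k → Finset V) : Prop :=
  (∀ v : V, ∃! i, v ∈ Vs i) ∧ ∀ i, (Vs i).Nonempty

/-- The graph `H(𝒫,c)` on `[k]`: `i` and `j` are joined iff `|E(V_i,V_j)| > c`. -/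
def partGraph (G : SimpleGraph V) {k : ℕ} (Vs : Fin k → Finset V) (c : ℝ) :
    SimpleGraph (Fin k) :=
  SimpleGraph.fromRel fun i j => c < (eBetween G (Vs i) (Vs j) : ℝ)

/-- A `δ`-primary decomposition of `G`. -/
def IsPrimaryDecomposition (G : SimpleGraph V) (δ : ℝ) {k : ℕ}
    (Vs : Fin k → Finset V) : Prop :=
  IsPartition Vs ∧
  (k : ℝ) ≤ 2 / δ ∧
  (∀ i, δ * (Fintype.card V : ℝ) / 2 ≤ ((Vs i).card : ℝ)) ∧
  (∀ i, ∀ v ∈ Vs i, δ ^ 4 * (Fintype.card V : ℝ) / 40 ≤ (degIn G v (Vs i) : ℝ)) ∧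
  (∀ i, δ ^ 10 / 2 ^ 22 ≤ gap (G.induce (↑(Vs i) : Set V)))

set_option linter.unusedSectionVars false in
lemma cheeger_le (G : SimpleGraph V) {S : Finset V} (hS : S.Nonempty)
    (hvol : 2 * vol G S ≤ vol G Finset.univ) :
    cheeger G ≤ (eBetween G S Sᶜ : ℝ) / (vol G S : ℝ) := by
  apply csInf_le
  · refine ⟨0, ?_⟩
    rintro r ⟨S', -, -, rfl⟩
    positivity
  · exact ⟨S, hS, hvol, rfl⟩

lemma vol_pos (G : SimpleGraph V) (hdeg : ∀ v, 1 ≤ deg G v) {S : Finset V}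
    (hS : S.Nonempty) : 0 < vol G S := by
  obtain ⟨v, hv⟩ := hS
  calc 0 < deg G v := hdeg v
  _ ≤ vol G S := Finset.single_le_sum (f := deg G) (fun _ _ => Nat.zero_le _) hv

lemma eBetween_pos (G : SimpleGraph V) (hconn : G.Connected) {S : Finset V}
    (hS : S.Nonempty) (hSc : Sᶜ.Nonempty) : 0 < eBetween G S Sᶜ := by
  obtain ⟨u, hu⟩ := hS
  obtain ⟨w, hw⟩ := hSc
  obtain ⟨p⟩ := hconn.preconnected u w
  obtain ⟨d, -, hd1, hd2⟩ := p.exists_boundary_dart (↑S : Set V) (by simpa using hu)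
    (by simpa using Finset.mem_compl.mp hw)
  have : (d.toProd.1, d.toProd.2) ∈ (S ×ˢ Sᶜ).filter fun p => G.Adj p.1 p.2 := by
    simp only [Finset.mem_filter, Finset.mem_product, Finset.mem_compl]
    exact ⟨⟨by simpa using hd1, by simpa using hd2⟩, d.adj⟩
  exact Finset.card_pos.mpr ⟨_, this⟩

lemma cheeger_pos (G : SimpleGraph V) (hconn : G.Connected)
    (hdeg : ∀ v, 1 ≤ deg G v) (hcard : 2 ≤ Fintype.card V) : 0 < cheeger G := by
  have hne : Nonempty V := hconn.nonempty
  obtain ⟨v₀, -, hv₀⟩ := Finset.exists_min_image Finset.univ (deg G)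
    ⟨Classical.arbitrary V, Finset.mem_univ _⟩
  set T : Set ℝ := {r | ∃ S : Finset V, S.Nonempty ∧ 2 * vol G S ≤ vol G Finset.univ ∧
    r = (eBetween G S Sᶜ : ℝ) / (vol G S : ℝ)} with hT
  have hTne : T.Nonempty := by
    refine ⟨_, ⟨{v₀}, Finset.singleton_nonempty _, ?_, rfl⟩⟩
    have h1 : vol G {v₀} = deg G v₀ := Finset.sum_singleton _ _
    have h2 : Fintype.card V • deg G v₀ ≤ vol G Finset.univ := by
      simpa [vol] using Finset.card_nsmul_le_sum Finset.univ (deg G) (deg G v₀) hv₀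
    rw [h1]
    calc 2 * deg G v₀ ≤ Fintype.card V * deg G v₀ := Nat.mul_le_mul_right _ hcard
    _ ≤ vol G Finset.univ := by simpa [smul_eq_mul] using h2
  have hTfin : T.Finite := by
    apply Set.Finite.subset
      (Set.finite_range fun S : Finset V => (eBetween G S Sᶜ : ℝ) / (vol G S : ℝ))
    rintro r ⟨S, -, -, rfl⟩
    exact ⟨S, rfl⟩
  obtain ⟨S, hSne, hSvol, hSeq⟩ := hTne.csInf_mem hTfin
  have hScne : Sᶜ.Nonempty := by
    rw [Finset.nonempty_iff_ne_empty]
    intro h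
    have : S = Finset.univ := by
      simpa using congrArg (·ᶜ) h
    rw [this] at hSvol
    have := vol_pos G hdeg (Finset.univ_nonempty)
    omega
  have h1 : 0 < vol G S := vol_pos G hdeg hSne
  have h2 : 0 < eBetween G S Sᶜ := eBetween_pos G hconn hSne hScne
  rw [show cheeger G = sInf T from rfl, hSeq]
  apply div_pos <;> exact_mod_cast ‹_›

set_option linter.unusedSectionVars false in
/-- complement of a union of parts is the union of the other parts -/
lemma biUnion_compl {k : ℕ} {Vs : Fin k → Finset V} (hpart : ∀ v : V, ∃! i, v ∈ Vs i)
    (T : Finset (Fin k)) : (T.biUnion Vs)ᶜ = Tᶜ.biUnion Vs := by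
  ext v
  obtain ⟨i, hi, hiu⟩ := hpart v
  simp only [Finset.mem_compl, Finset.mem_biUnion]
  constructor
  · intro h
    refine ⟨i, ?_, hi⟩
    intro hiT
    exact h ⟨i, hiT, hi⟩
  · rintro ⟨j, hj, hvj⟩ ⟨i', hi', hvi'⟩
    exact hj (((hpart v).unique hvj hvi') ▸ hi')

lemma eBetween_biUnion_le (G : SimpleGraph V) {k : ℕ} (Vs : Fin k → Finset V)
    (T U : Finset (Fin k)) :
    eBetween G (T.biUnion Vs) (U.biUnion Vs) ≤
      ∑ i ∈ T, ∑ j ∈ U, eBetween G (Vs i) (Vs j) := by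
  have hsub : ((T.biUnion Vs ×ˢ U.biUnion Vs).filter fun p => G.Adj p.1 p.2) ⊆
      (T ×ˢ U).biUnion fun q => (Vs q.1 ×ˢ Vs q.2).filter fun p => G.Adj p.1 p.2 := by
    rintro ⟨u, w⟩ hp
    simp only [Finset.mem_filter, Finset.mem_product, Finset.mem_biUnion] at hp ⊢
    obtain ⟨⟨⟨i, hiT, hui⟩, ⟨j, hjU, hwj⟩⟩, hadj⟩ := hp
    exact ⟨(i, j), ⟨hiT, hjU⟩, ⟨hui, hwj⟩, hadj⟩
  calc eBetween G (T.biUnion Vs) (U.biUnion Vs) ≤ _ := Finset.card_le_card hsub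
  _ ≤ ∑ q ∈ T ×ˢ U, ((Vs q.1 ×ˢ Vs q.2).filter fun p => G.Adj p.1 p.2).card :=
      Finset.card_biUnion_le
  _ = ∑ i ∈ T, ∑ j ∈ U, eBetween G (Vs i) (Vs j) := Finset.sum_product _ _ _


/-- from the proof of Theorem 1.2.  Let `G` be a connected simple
graph on `n` vertices with minimal degree at least `δn` and Cheeger constant `r`, and
let `𝒫 : V = V₁ ⊔ … ⊔ V_k` be a `δ`-primary decomposition of `G`.  Then the graph
`H(𝒫, r δ² n² / (2k²))` is connected. -/
theorem primary_partition_graph_connected (δ : ℝ) (hδ : δ ∈ Set.Ioo (0 : ℝ) 1)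
    (G : SimpleGraph V) (hconn : G.Connected)
    (hdeg : ∀ v : V, δ * (Fintype.card V : ℝ) ≤ (deg G v : ℝ))
    {k : ℕ} (Vs : Fin k → Finset V) (hprim : IsPrimaryDecomposition G δ Vs) :
    (partGraph G Vs
      (cheeger G * δ ^ 2 * (Fintype.card V : ℝ) ^ 2 / (2 * (k : ℝ) ^ 2))).Connected := by
  obtain ⟨⟨hpart, hVne⟩, hk, hsize, -, -⟩ := hprim
  have hV : Nonempty V := hconn.nonempty
  set n := Fintype.card V with hn
  have hnpos : 0 < n := Fintype.card_pos
  have hnR : (0 : ℝ) < n := by exact_mod_cast hnpos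
  have hdeg1 : ∀ v, 1 ≤ deg G v := by
    intro v
    have : (0 : ℝ) < deg G v := lt_of_lt_of_le (mul_pos hδ.1 hnR) (hdeg v)
    exact_mod_cast this
  have hcard2 : 2 ≤ n := by
    obtain ⟨v⟩ := hV
    have : 0 < Nat.card {u | G.Adj v u} := hdeg1 v
    obtain ⟨⟨u, hu⟩, -⟩ := Nat.card_pos_iff.mp this
    exact Fintype.one_lt_card_iff_nontrivial.mpr ⟨v, u, G.ne_of_adj hu⟩
  -- k ≥ 1
  obtain ⟨v₀⟩ := hV
  obtain ⟨i₀, hi₀, -⟩ := hpart v₀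
  have hkpos : 0 < k := i₀.pos
  have hkR : (0 : ℝ) < k := by exact_mod_cast hkpos
  set r := cheeger G with hr
  have hrpos : 0 < r := cheeger_pos G hconn hdeg1 hcard2
  set c := r * δ ^ 2 * (n : ℝ) ^ 2 / (2 * (k : ℝ) ^ 2) with hc
  set H := partGraph G Vs c with hH
  rw [SimpleGraph.connected_iff]
  refine ⟨?_, ⟨i₀⟩⟩
  by_contra hnp
  rw [SimpleGraph.Preconnected] at hnp
  push_neg at hnp
  obtain ⟨a, b, hab⟩ := hnp
  set I : Finset (Fin k) := Finset.univ.filter (H.Reachable a ·) with hI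
  have haI : a ∈ I := Finset.mem_filter.mpr ⟨Finset.mem_univ _, SimpleGraph.Reachable.refl a⟩
  have hbI : b ∉ I := by simp [hI, hab]
  have hclosed : ∀ x y, H.Adj x y → (x ∈ I ↔ y ∈ I) := by
    intro x y hxy
    simp only [hI, Finset.mem_filter, Finset.mem_univ, true_and]
    exact ⟨fun h => h.trans hxy.reachable, fun h => h.trans hxy.symm.reachable⟩
  have hsplit : ∀ T : Finset (Fin k),
      vol G (T.biUnion Vs) + vol G (Tᶜ.biUnion Vs) = vol G Finset.univ := by
    intro T
    rw [← biUnion_compl hpart T]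
    exact Finset.sum_add_sum_compl _ _
  obtain ⟨T, hTne, hTcne, hTadj, hTvol⟩ : ∃ T : Finset (Fin k), T.Nonempty ∧ Tᶜ.Nonempty ∧
      (∀ x ∈ T, ∀ y ∈ Tᶜ, ¬H.Adj x y) ∧
      2 * vol G (T.biUnion Vs) ≤ vol G Finset.univ := by
    by_cases hcase : 2 * vol G (I.biUnion Vs) ≤ vol G Finset.univ
    · refine ⟨I, ⟨a, haI⟩, ⟨b, Finset.mem_compl.mpr hbI⟩, ?_, hcase⟩
      intro x hx y hy hxy
      exact Finset.mem_compl.mp hy ((hclosed x y hxy).mp hx)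
    · refine ⟨Iᶜ, ⟨b, Finset.mem_compl.mpr hbI⟩, ?_, ?_, ?_⟩
      · rw [compl_compl]; exact ⟨a, haI⟩
      · intro x hx y hy hxy
        rw [compl_compl] at hy
        exact Finset.mem_compl.mp hx ((hclosed y x hxy.symm).mp hy)
      · have := hsplit I
        omega
  set S := T.biUnion Vs with hS
  have hScompl : Sᶜ = Tᶜ.biUnion Vs := biUnion_compl hpart T
  obtain ⟨t₀, ht₀⟩ := hTne
  have hSne : S.Nonempty := by
    obtain ⟨v, hv⟩ := hVne t₀
    exact ⟨v, Finset.mem_biUnion.mpr ⟨t₀, ht₀, hv⟩⟩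
  have hvolSpos : 0 < vol G S := vol_pos G hdeg1 hSne
  have hvolSR : (0 : ℝ) < vol G S := by exact_mod_cast hvolSpos
  -- lower bound: r * vol S ≤ eBetween
  have hlow : r * (vol G S : ℝ) ≤ (eBetween G S Sᶜ : ℝ) := by
    have := cheeger_le G hSne hTvol
    rw [le_div_iff₀ hvolSR] at this
    exact this
  -- vol S ≥ δ n /2 * (δ n)
  have hvolS_lb : δ * n / 2 * (δ * n) ≤ (vol G S : ℝ) := by
    have h1 : ((Vs t₀).card : ℝ) ≤ (S.card : ℝ) := by
      exact_mod_cast Finset.card_le_card (Finset.subset_biUnion_of_mem Vs ht₀)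
    have h2 : (S.card : ℝ) * (δ * n) ≤ (vol G S : ℝ) := by
      rw [vol, Nat.cast_sum]
      calc (S.card : ℝ) * (δ * n) = ∑ _v ∈ S, δ * n := by
            rw [Finset.sum_const, nsmul_eq_mul]
      _ ≤ ∑ v ∈ S, (deg G v : ℝ) := Finset.sum_le_sum fun v _ => hdeg v
    calc δ * n / 2 * (δ * n) ≤ ((Vs t₀).card : ℝ) * (δ * n) :=
          mul_le_mul_of_nonneg_right (hsize t₀) (mul_pos hδ.1 hnR).le
    _ ≤ (S.card : ℝ) * (δ * n) := mul_le_mul_of_nonneg_right h1 (mul_pos hδ.1 hnR).le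
    _ ≤ _ := h2
  -- upper bound on eBetween
  have hup : (eBetween G S Sᶜ : ℝ) ≤ (T.card : ℝ) * (Tᶜ.card : ℝ) * c := by
    rw [hScompl]
    have h1 := eBetween_biUnion_le G Vs T Tᶜ
    have h2 : (∑ i ∈ T, ∑ j ∈ Tᶜ, (eBetween G (Vs i) (Vs j) : ℝ)) ≤
        (T.card : ℝ) * (Tᶜ.card : ℝ) * c := by
      calc _ ≤ ∑ i ∈ T, ∑ _j ∈ Tᶜ, c := by
            apply Finset.sum_le_sum; intro i hi
            apply Finset.sum_le_sum; intro j hj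
            have hne : i ≠ j := fun h => (Finset.mem_compl.mp hj) (h ▸ hi)
            have hnadj := hTadj i hi j hj
            rw [hH, partGraph, SimpleGraph.fromRel_adj] at hnadj
            push_neg at hnadj
            exact (hnadj hne).1
      _ = (T.card : ℝ) * (Tᶜ.card : ℝ) * c := by
            simp [Finset.sum_const, nsmul_eq_mul, mul_assoc]
    calc (eBetween G (T.biUnion Vs) (Tᶜ.biUnion Vs) : ℝ) ≤
        ∑ i ∈ T, ∑ j ∈ Tᶜ, (eBetween G (Vs i) (Vs j) : ℝ) := by exact_mod_cast h1
    _ ≤ _ := h2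
  -- card bound
  have hcardsum : (T.card : ℝ) + (Tᶜ.card : ℝ) = (k : ℝ) := by
    have := Finset.card_add_card_compl T
    simp only [Fintype.card_fin] at this
    exact_mod_cast this
  have hTcardpos : (0:ℝ) ≤ T.card := by positivity
  have hTccardpos : (0:ℝ) ≤ Tᶜ.card := by positivity
  have hprod : (T.card : ℝ) * (Tᶜ.card : ℝ) ≤ (k : ℝ) ^ 2 / 4 := by
    nlinarith [sq_nonneg ((T.card : ℝ) - (Tᶜ.card : ℝ))]
  -- final contradiction
  have hcpos : 0 < c := by
    rw [hc]
    exact div_pos (mul_pos (mul_pos hrpos (pow_pos hδ.1 2)) (pow_pos hnR 2)) (by positivity)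
  have hchain : r * (δ * n / 2 * (δ * n)) ≤ (k : ℝ) ^ 2 / 4 * c := by
    calc r * (δ * n / 2 * (δ * n)) ≤ r * (vol G S : ℝ) :=
          mul_le_mul_of_nonneg_left hvolS_lb hrpos.le
    _ ≤ (eBetween G S Sᶜ : ℝ) := hlow
    _ ≤ (T.card : ℝ) * (Tᶜ.card : ℝ) * c := hup
    _ ≤ (k : ℝ) ^ 2 / 4 * c := mul_le_mul_of_nonneg_right hprod hcpos.le
  rw [hc] at hchain
  have hk0 : ((k : ℝ)) ≠ 0 := ne_of_gt hkR
  have hRHS : (k : ℝ) ^ 2 / 4 * (r * δ ^ 2 * (n : ℝ) ^ 2 / (2 * (k : ℝ) ^ 2)) =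
      r * δ ^ 2 * (n : ℝ) ^ 2 / 8 := by field_simp; ring
  have hLHS : r * (δ * (n : ℝ) / 2 * (δ * (n : ℝ))) = r * δ ^ 2 * (n : ℝ) ^ 2 / 2 := by ring
  have hApos : 0 < r * δ ^ 2 * (n : ℝ) ^ 2 :=
    mul_pos (mul_pos hrpos (pow_pos hδ.1 2)) (pow_pos hnR 2)
  rw [hLHS, hRHS] at hchain
  linarith

end Paper
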